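/- Let r ≥ 0. Define S by S_0 = 1, S_{k+1} = (1 + (2+r)S_k + sqrt((1+(2+r)S_k)² − 4S_k²))/2, and T by T_0 = 1, T_{k+1} = (1 + 2T_k + sqrt(1 + 4T_k))/2. Then for every k ≥ 0, (∑_{i=0}^{k} S_i)/S_k ≤ (∑_{i=0}^{k} T_i)/T_k. -/

import Mathlib

noncomputable def hh (u : ℝ) : ℝ := (u - Real.sqrt (u^2 - 4)) / 2

lemma hh_eq {u : ℝ} (hu : 2 ≤ u) : hh u = 2 / (u + Real.sqrt (u^2 - 4)) := by
  have h4 : (0:ℝ) ≤ u^2 - 4 := by nlinarith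
  have hs := Real.sq_sqrt h4
  have hn := Real.sqrt_nonneg (u^2 - 4)
  have hpos : 0 < u + Real.sqrt (u^2 - 4) := by linarith
  rw [hh, eq_div_iff (ne_of_gt hpos)]
  nlinarith [hs]

lemma hh_pos {u : ℝ} (hu : 2 ≤ u) : 0 < hh u := by
  have h : Real.sqrt (u^2 - 4) < u := by
    rw [Real.sqrt_lt' (by linarith : (0:ℝ) < u)]
    nlinarith
  rw [hh]; linarith

lemma hh_le_one {u : ℝ} (hu : 2 ≤ u) : hh u ≤ 1 := by
  have h : u - 2 ≤ Real.sqrt (u^2 - 4) := by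
    rw [show u^2 - 4 = (u-2)*(u+2) by ring]
    have := Real.sqrt_le_sqrt (show (u-2)^2 ≤ (u-2)*(u+2) by nlinarith)
    rwa [Real.sqrt_sq (by linarith)] at this
  rw [hh]; linarith

lemma hh_mono {u v : ℝ} (hv : 2 ≤ v) (huv : v ≤ u) : hh u ≤ hh v := by
  rw [hh_eq (by linarith), hh_eq hv]
  have hn := Real.sqrt_nonneg (v^2 - 4)
  have hpos : 0 < v + Real.sqrt (v^2 - 4) := by linarith
  gcongr

lemma ratio_eq {x c : ℝ} (hx : 0 < x) :
    (1 + c*x + Real.sqrt ((1 + c*x)^2 - 4*x^2))/2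
      = x * (((1/x + c) + Real.sqrt ((1/x + c)^2 - 4)) / 2) := by
  have h1 : (1 + c*x)^2 - 4*x^2 = x^2 * ((1/x + c)^2 - 4) := by
    field_simp
  rw [h1, Real.sqrt_mul (sq_nonneg x), Real.sqrt_sq hx.le]
  field_simp

lemma step_facts {x c : ℝ} (hx : 0 < x) (hc : 2 ≤ c)
    {S' : ℝ} (hS' : S' = (1 + c*x + Real.sqrt ((1 + c*x)^2 - 4*x^2))/2) :
    0 < S' ∧ 1/S' = (1/x) * hh (1/x + c) := by
  have hix : 0 < 1/x := by positivity
  set u := 1/x + c with hu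
  have hu2 : 2 ≤ u := by simp only [hu]; linarith
  have hn := Real.sqrt_nonneg (u^2 - 4)
  have hE : S' = x * ((u + Real.sqrt (u^2 - 4)) / 2) := by rw [hS', ratio_eq hx]
  have hden : 0 < u + Real.sqrt (u^2 - 4) := by linarith
  have hpos : 0 < S' := by rw [hE]; positivity
  refine ⟨hpos, ?_⟩
  rw [hE, hh_eq hu2]
  field_simp

lemma phi_mono {b c : ℝ} (hb : 0 < b) (hbc : b ≤ c) :
    b * hh (b+2) ≤ c * hh (c+2) := by
  have hc : 0 < c := lt_of_lt_of_le hb hbc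
  have key : ∀ x : ℝ, 0 < x → x * hh (x+2) = 2 / (1 + 2/x + Real.sqrt (1 + 4/x)) := by
    intro x hx
    rw [hh_eq (by linarith : (2:ℝ) ≤ x + 2)]
    have h1 : (x+2)^2 - 4 = x^2 * (1 + 4/x) := by field_simp; ring
    rw [h1, Real.sqrt_mul (sq_nonneg x), Real.sqrt_sq hx.le]
    have hs : 0 ≤ Real.sqrt (1 + 4/x) := Real.sqrt_nonneg _
    have hd1 : 0 < x + 2 + x * Real.sqrt (1 + 4/x) := by positivity
    have hd2 : 0 < 1 + 2/x + Real.sqrt (1 + 4/x) := by positivity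
    field_simp
  rw [key b hb, key c hc]
  have hsc : 0 ≤ Real.sqrt (1 + 4/c) := Real.sqrt_nonneg _
  have hdc : 0 < 1 + 2/c + Real.sqrt (1 + 4/c) := by positivity
  have hle : 1 + 2 / c + Real.sqrt (1 + 4 / c) ≤ 1 + 2 / b + Real.sqrt (1 + 4 / b) := by
    gcongr
  exact div_le_div_of_nonneg_left (by norm_num) hdc hle

theorem stmt_12 (r : ℝ) (hr : 0 ≤ r) (S T : ℕ → ℝ) (hS0 : S 0 = 1)
    (hSrec : ∀ k : ℕ, S (k+1) =
      (1 + (2 + r) * S k + Real.sqrt ((1 + (2 + r) * S k) ^ 2 - 4 * (S k) ^ 2)) / 2)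
    (hT0 : T 0 = 1)
    (hTrec : ∀ k : ℕ, T (k+1) = (1 + 2 * T k + Real.sqrt (1 + 4 * T k)) / 2) :
    ∀ k : ℕ,
      (∑ i ∈ Finset.range (k+1), S i) / S k ≤ (∑ i ∈ Finset.range (k+1), T i) / T k := by
  have hSpos : ∀ k, 0 < S k := by
    intro k; induction k with
    | zero => rw [hS0]; norm_num
    | succ n ih =>
      rw [hSrec n]
      have := Real.sqrt_nonneg ((1 + (2 + r) * S n) ^ 2 - 4 * (S n) ^ 2)
      nlinarith
  have hTpos : ∀ k, 0 < T k := by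
    intro k; induction k with
    | zero => rw [hT0]; norm_num
    | succ n ih =>
      rw [hTrec n]
      have := Real.sqrt_nonneg (1 + 4 * T n)
      nlinarith
  have key : ∀ k, 1/(T k) ≤ 1/(S k) + r ∧
      (∑ i ∈ Finset.range (k+1), S i) / S k ≤ (∑ i ∈ Finset.range (k+1), T i) / T k := by
    intro k; induction k with
    | zero => simp [hS0, hT0]; linarith
    | succ n ih =>
      obtain ⟨h1, h2⟩ := ih
      have hSn := hSpos n; have hTn := hTpos n
      have ha : 0 < 1 / S n := by positivity
      have hb : 0 < 1 / T n := by positivity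
      have hc2r : (2:ℝ) ≤ 2 + r := by linarith
      obtain ⟨hS1pos, hS1inv⟩ := step_facts hSn hc2r (hSrec n)
      have hTform : T (n+1) = (1 + 2*T n + Real.sqrt ((1 + 2*T n)^2 - 4*(T n)^2))/2 := by
        rw [hTrec n, show (1 + 2*T n)^2 - 4*(T n)^2 = 1 + 4*T n from by ring]
      obtain ⟨hT1pos, hT1inv⟩ := step_facts hTn le_rfl hTform
      -- reciprocal invariant
      have hu2 : (2:ℝ) ≤ 1/S n + (2 + r) := by linarith
      have hv2 : (2:ℝ) ≤ 1/T n + 2 := by linarith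
      have hinv : 1/(T (n+1)) ≤ 1/(S (n+1)) + r := by
        rw [hS1inv, hT1inv]
        have c1 : (1/T n) * hh (1/T n + 2) ≤ (1/S n + r) * hh ((1/S n + r) + 2) :=
          phi_mono hb (by linarith)
        have e1 : (1/S n + r) + 2 = 1/S n + (2 + r) := by ring
        rw [e1] at c1
        have c2 := hh_le_one hu2
        have c3 := hh_pos hu2
        nlinarith
      refine ⟨hinv, ?_⟩
      have hSsum : 0 < ∑ i ∈ Finset.range (n+1), S i :=
        Finset.sum_pos (fun i _ => hSpos i) ⟨0, by simp⟩
      have eS : (∑ i ∈ Finset.range (n+2), S i) / S (n+1)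
          = ((∑ i ∈ Finset.range (n+1), S i) / S n) * hh (1/S n + (2+r)) + 1 := by
        rw [Finset.sum_range_succ, add_div, div_self (ne_of_gt hS1pos),
          div_eq_mul_one_div (∑ i ∈ Finset.range (n+1), S i) (S (n+1)), hS1inv,
          div_eq_mul_one_div (∑ i ∈ Finset.range (n+1), S i) (S n)]
        ring
      have eT : (∑ i ∈ Finset.range (n+2), T i) / T (n+1)
          = ((∑ i ∈ Finset.range (n+1), T i) / T n) * hh (1/T n + 2) + 1 := by
        rw [Finset.sum_range_succ, add_div, div_self (ne_of_gt hT1pos),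
          div_eq_mul_one_div (∑ i ∈ Finset.range (n+1), T i) (T (n+1)), hT1inv,
          div_eq_mul_one_div (∑ i ∈ Finset.range (n+1), T i) (T n)]
        ring
      rw [eS, eT]
      have hA0 : 0 ≤ (∑ i ∈ Finset.range (n+1), S i) / S n := by positivity
      have hmono : hh (1/S n + (2+r)) ≤ hh (1/T n + 2) := hh_mono hv2 (by linarith)
      have hvpos := hh_pos hv2
      nlinarith
  exact fun k => (key k).2
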